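/- Let M > 0, λ = 1/(√5·M), and let T ≥ 1 be an integer. Let u^0, u^T, u* ∈ ℝ^d and r^0, r^T ∈ ℝ^d (representing the residuals a^0 + b^0 and a^T + b^T). Assume: (i) ⟨r^T, u^T − u^0⟩ + (λ(T+3)/4)‖r^T‖² ≤ (3λ/(2(T+1)(T+2)))‖r^0‖²; and (ii) ⟨r^T, u^T − u*⟩ ≥ 0. Then ‖r^T‖² ≤ (1/(T+1)²)·(96 M²‖u^0 − u*‖² + 12‖r^0‖²). -/

import Mathlib

open scoped RealInnerProductSpace

set_option maxHeartbeats 1000000 in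
/-- From the unrolled Lyapunov inequality of the Extra Anchored Gradient
algorithm and monotonicity at the solution, the final residual bound follows. -/
theorem stmt_12 {d : ℕ} (M : ℝ) (hM : 0 < M)
    (lam : ℝ) (hlam : lam = 1 / (Real.sqrt 5 * M))
    (T : ℕ) (hT : 1 ≤ T)
    (u0 uT ustar r0 rT : EuclideanSpace ℝ (Fin d))
    (h1 : ⟪rT, uT - u0⟫ + lam * ((T : ℝ) + 3) / 4 * ‖rT‖ ^ 2
        ≤ 3 * lam / (2 * ((T : ℝ) + 1) * ((T : ℝ) + 2)) * ‖r0‖ ^ 2)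
    (h2 : 0 ≤ ⟪rT, uT - ustar⟫) :
    ‖rT‖ ^ 2 ≤ 1 / ((T : ℝ) + 1) ^ 2 *
      (96 * M ^ 2 * ‖u0 - ustar‖ ^ 2 + 12 * ‖r0‖ ^ 2) := by
  set s := ‖rT‖ with hs
  set b := ‖u0 - ustar‖ with hb
  set c := ‖r0‖ with hc
  set t := (T : ℝ) with ht
  have hs0 : 0 ≤ s := norm_nonneg _
  have hb0 : 0 ≤ b := norm_nonneg _
  have hc0 : 0 ≤ c := norm_nonneg _
  have ht1 : (1 : ℝ) ≤ t := by rw [ht]; exact_mod_cast hT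
  set S := Real.sqrt 5 with hSdef
  have hS5 : S ^ 2 = 5 := Real.sq_sqrt (by norm_num)
  have hS5pos : 0 < S := Real.sqrt_pos.mpr (by norm_num)
  have hlampos : 0 < lam := by rw [hlam]; positivity
  have ht10 : (0 : ℝ) < t + 1 := by linarith
  have ht20 : (0 : ℝ) < t + 2 := by linarith
  have ht30 : (0 : ℝ) < t + 3 := by linarith
  -- Cauchy–Schwarz step
  have hcs : -(s * b) ≤ ⟪rT, uT - u0⟫ := by
    have e : uT - u0 = (uT - ustar) + (ustar - u0) := by abel
    rw [e, inner_add_right]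
    have habs := abs_real_inner_le_norm rT (ustar - u0)
    have hn : ‖ustar - u0‖ = b := by rw [hb, norm_sub_rev]
    have h3 : -(s * b) ≤ ⟪rT, ustar - u0⟫ := by
      rw [hn] at habs
      have := neg_abs_le (⟪rT, ustar - u0⟫ : ℝ)
      nlinarith
    linarith
  have hkey : lam * (t + 3) / 4 * s ^ 2
      ≤ s * b + 3 * lam / (2 * (t + 1) * (t + 2)) * c ^ 2 := by linarith
  have hlam' : lam * (S * M) = 1 := by
    rw [hlam]; field_simp
  -- clear denominators
  have hstar : (t + 3) * ((t + 1) * (t + 2)) * s ^ 2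
      ≤ 4 * S * M * ((t + 1) * (t + 2)) * (s * b) + 6 * c ^ 2 := by
    have hKpos : (0 : ℝ) < 4 * S * M * ((t + 1) * (t + 2)) := by positivity
    have hmul := mul_le_mul_of_nonneg_left hkey hKpos.le
    have e1 : 4 * S * M * ((t + 1) * (t + 2)) * (lam * (t + 3) / 4 * s ^ 2)
        = (lam * (S * M)) * ((t + 3) * ((t + 1) * (t + 2)) * s ^ 2) := by ring
    have e2 : 4 * S * M * ((t + 1) * (t + 2)) *
          (s * b + 3 * lam / (2 * (t + 1) * (t + 2)) * c ^ 2)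
        = 4 * S * M * ((t + 1) * (t + 2)) * (s * b)
          + (lam * (S * M)) * (6 * c ^ 2) := by
      field_simp
      ring
    rw [e1, e2, hlam', one_mul, one_mul] at hmul
    exact hmul
  -- AM–GM step
  have hamgm : 4 * S * M * ((t + 3) * (s * b))
      ≤ (t + 3) ^ 2 * s ^ 2 / 2 + 40 * M ^ 2 * b ^ 2 := by
    have e : ((t + 3) * s - 4 * S * M * b) ^ 2
        = (t + 3) ^ 2 * s ^ 2 - 8 * S * M * ((t + 3) * (s * b))
          + 16 * S ^ 2 * (M ^ 2 * b ^ 2) := by ring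
    have hsq := sq_nonneg ((t + 3) * s - 4 * S * M * b)
    rw [e, hS5] at hsq
    linarith
  have hPpos : (0 : ℝ) < (t + 1) * (t + 2) := by positivity
  -- combine: multiply hstar by (t+3) and hamgm by P
  have hB : (t + 3) ^ 2 * ((t + 1) * (t + 2)) * s ^ 2
      ≤ 80 * M ^ 2 * ((t + 1) * (t + 2)) * b ^ 2 + 12 * (t + 3) * c ^ 2 := by
    have h4 := mul_le_mul_of_nonneg_left hstar ht30.le
    have h5 := mul_le_mul_of_nonneg_left hamgm hPpos.le
    have e4 : (t + 3) * ((t + 3) * ((t + 1) * (t + 2)) * s ^ 2)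
        = (t + 3) ^ 2 * ((t + 1) * (t + 2)) * s ^ 2 := by ring
    have e5 : (t + 3) * (4 * S * M * ((t + 1) * (t + 2)) * (s * b) + 6 * c ^ 2)
        = ((t + 1) * (t + 2)) * (4 * S * M * ((t + 3) * (s * b)))
          + 6 * (t + 3) * c ^ 2 := by ring
    rw [e4, e5] at h4
    have e6 : ((t + 1) * (t + 2)) * ((t + 3) ^ 2 * s ^ 2 / 2 + 40 * M ^ 2 * b ^ 2)
        = (t + 3) ^ 2 * ((t + 1) * (t + 2)) * s ^ 2 / 2
          + 40 * M ^ 2 * ((t + 1) * (t + 2)) * b ^ 2 := by ring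
    rw [e6] at h5
    linarith
  have aux : (t + 1) ^ 2 * s ^ 2 ≤ 96 * M ^ 2 * b ^ 2 + 12 * c ^ 2 := by
    have hmono : (t + 1) ^ 2 * ((t + 1) * (t + 2)) * s ^ 2
        ≤ (t + 3) ^ 2 * ((t + 1) * (t + 2)) * s ^ 2 := by
      nlinarith [mul_nonneg (mul_nonneg (by linarith : (0:ℝ) ≤ 4 * t + 8) hPpos.le)
        (sq_nonneg s)]
    have hrhs : 80 * M ^ 2 * ((t + 1) * (t + 2)) * b ^ 2 + 12 * (t + 3) * c ^ 2
        ≤ ((t + 1) * (t + 2)) * (96 * M ^ 2 * b ^ 2 + 12 * c ^ 2) := by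
      have h6 : (0:ℝ) ≤ 16 * (M ^ 2 * (((t + 1) * (t + 2)) * b ^ 2)) := by positivity
      have h7 : (0:ℝ) ≤ (t ^ 2 + 2 * t - 1) * c ^ 2 :=
        mul_nonneg (by linarith [sq_nonneg t] : (0:ℝ) ≤ t ^ 2 + 2 * t - 1) (sq_nonneg c)
      linarith
    have hfin : (t + 1) ^ 2 * ((t + 1) * (t + 2)) * s ^ 2
        ≤ ((t + 1) * (t + 2)) * (96 * M ^ 2 * b ^ 2 + 12 * c ^ 2) := by linarith
    have := (mul_le_mul_iff_of_pos_right hPpos).mp (by linarith [hfin] :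
      ((t + 1) ^ 2 * s ^ 2) * ((t + 1) * (t + 2))
        ≤ (96 * M ^ 2 * b ^ 2 + 12 * c ^ 2) * ((t + 1) * (t + 2)))
    exact this
  rw [one_div, inv_mul_eq_div, le_div_iff₀ (by positivity : (0 : ℝ) < (t + 1) ^ 2)]
  linarith [aux]
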